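/- Assume 𝔭 = 𝔠. Suppose 𝔅 ⊆ P(ω) is a Boolean algebra of cardinality < 𝔠 containing all finite sets, S ⊆ ω is infinite, 𝔅 is trivial on S (for every B ∈ 𝔅, either B ∩ S or S \ B is finite), and (μ_k)_{k∈S} is a sequence in the unit ball of ℓ¹ with |μ_k({k})| ≥ c for a fixed c > 0. Then for every ε > 0 there exist infinite disjoint sets N, T ⊆ S and pairwise disjoint infinite sets A₀, A₁, A₂ ⊆ N such that: (i) (μ_k)_{k∈N} converges in variation norm on subsets of T; and (ii) the closure of {μ_k : k ∈ N} in the pointwise topology on the algebra 𝔅′ generated by 𝔅 ∪ {A₀, A₁, A₂} contains three measures of the form b·δ_{x_i} + ν_i (i = 0, 1, 2) with |b| ≥ c, where x₀, x₁, x₂ are three distinct ultrafilters on 𝔅′ (x_i being the unique nonprincipal ultrafilter containing A_i), and ‖ν_i − ν_j‖_{𝔅′} ≤ ε for all i, j. -/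

import Mathlib

/-- A family of subsets of `ω` has the strong finite intersection property. -/
def HasSFIP (F : Set (Set ℕ)) : Prop :=
  ∀ G : Finset (Set ℕ), ↑G ⊆ F → (⋂₀ (↑G : Set (Set ℕ)) : Set ℕ).Infinite

/-- A family of subsets of `ω` has an infinite pseudo-intersection. -/
def HasPseudoIntersection (F : Set (Set ℕ)) : Prop :=
  ∃ A : Set ℕ, A.Infinite ∧ ∀ B ∈ F, (A \ B).Finite

/-- The pseudo-intersection number `𝔭`. -/
noncomputable def pseudoIntersectionNumber : Cardinal :=
  sInf {c : Cardinal | ∃ F : Set (Set ℕ),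
    HasSFIP F ∧ ¬ HasPseudoIntersection F ∧ Cardinal.mk F = c}

/-- The finitely additive measure on `𝒫(ω)` associated to an `ℓ¹` element. -/
noncomputable def l1Meas (x : ℕ → ℝ) (B : Set ℕ) : ℝ := ∑' j : B, x j

/-- `ν` is a cluster point of the subsequence `(l1Meas (μ k))_{k ∈ N}` in the topology of
pointwise convergence on members of the family `𝔄`. -/
def IsClusterPtOnIn (μ : ℕ → ℕ → ℝ) (N : Set ℕ) (𝔄 : Set (Set ℕ)) (ν : Set ℕ → ℝ) : Prop :=
  ∀ ε > (0 : ℝ), ∀ F : Finset (Set ℕ), ↑F ⊆ 𝔄 →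
    {k ∈ N | ∀ B ∈ F, |l1Meas (μ k) B - ν B| < ε}.Infinite

open scoped Classical

open Filter Set MeasureTheory Topology

set_option maxHeartbeats 1000000

/-- The filter of "cofinite subsets of N". -/
def flt (N : Set ℕ) : Filter ℕ := cofinite ⊓ 𝓟 N

lemma mem_flt {s N : Set ℕ} : s ∈ flt N ↔ (N \ s).Finite := by
  rw [flt, mem_inf_principal, mem_cofinite]
  constructor
  · intro h; refine h.subset ?_; intro x hx hc; exact hx.2 (hc hx.1)
  · intro h; refine h.subset ?_; intro x hx
    rw [mem_compl_iff, mem_setOf_eq] at hx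
    push_neg at hx; exact ⟨hx.1, hx.2⟩

lemma flt_neBot {N : Set ℕ} (hN : N.Infinite) : (flt N).NeBot := by
  rw [← forall_mem_nonempty_iff_neBot]
  intro s hs
  have := (hN.diff (mem_flt.1 hs)).nonempty
  obtain ⟨x, hx⟩ := this
  refine ⟨x, ?_⟩
  by_cases h : x ∈ s
  · exact h
  · exact absurd ⟨hx.1, h⟩ hx.2

lemma flt_mono {N N' : Set ℕ} (h : (N \ N').Finite) : flt N ≤ flt N' := by
  intro s hs
  rw [mem_flt] at hs ⊢
  exact (h.union hs).subset (fun x hx => by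
    by_cases hx' : x ∈ N'
    · exact Or.inr ⟨hx', hx.2⟩
    · exact Or.inl ⟨hx.1, hx'⟩)

lemma flt_le_cofinite (N : Set ℕ) : flt N ≤ cofinite := inf_le_left

/-- Part A: families of size `< 𝔭` with SFIP have a pseudo-intersection. -/
lemma hasPseudoIntersection_of_lt (F : Set (Set ℕ)) (hs : HasSFIP F)
    (hF : Cardinal.mk F < pseudoIntersectionNumber) : HasPseudoIntersection F := by
  by_contra h
  exact absurd hF (not_lt.2 (csInf_le' ⟨F, hs, h, rfl⟩))

/-- Chains mod finite consisting of infinite sets have the SFIP. -/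
lemma sfip_of_chain {F : Set (Set ℕ)} (hne : F.Nonempty) (hinf : ∀ X ∈ F, X.Infinite)
    (hch : ∀ X ∈ F, ∀ Y ∈ F, (X \ Y).Finite ∨ (Y \ X).Finite) : HasSFIP F := by
  classical
  have claim : ∀ G : Finset (Set ℕ), ↑G ⊆ F → ∃ W ∈ F, ∀ B ∈ G, (W \ B).Finite := by
    intro G
    induction G using Finset.induction_on with
    | empty => intro _; obtain ⟨W, hW⟩ := hne; exact ⟨W, hW, by simp⟩
    | @insert B G hB ih =>
      intro hsub
      have hBF : B ∈ F := hsub (Finset.mem_insert_self _ _)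
      obtain ⟨W, hWF, hW⟩ := ih (fun x hx => hsub (Finset.mem_insert_of_mem hx))
      rcases hch W hWF B hBF with h | h
      · refine ⟨W, hWF, ?_⟩
        intro B' hB'
        rcases Finset.mem_insert.1 hB' with rfl | hB'
        · exact h
        · exact hW B' hB'
      · refine ⟨B, hBF, ?_⟩
        intro B' hB'
        rcases Finset.mem_insert.1 hB' with rfl | hB'
        · simp
        · exact ((h.union (hW B' hB')).subset (fun x hx => by
            by_cases hxW : x ∈ W
            · exact Or.inr ⟨hxW, hx.2⟩
            · exact Or.inl ⟨hx.1, hxW⟩))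
  intro G hG
  obtain ⟨W, hWF, hW⟩ := claim G hG
  have hfin : (⋃ B ∈ G, (W \ B)).Finite :=
    Set.Finite.biUnion G.finite_toSet (fun B hB => hW B hB)
  refine ((hinf W hWF).diff hfin).mono ?_
  intro x hx
  rw [mem_sInter]
  intro B hB
  by_contra hxB
  exact hx.2 (mem_biUnion hB ⟨hx.1, hxB⟩)

/-- Bolzano–Weierstrass selection along an infinite subset. -/
lemma exists_subseq_tendsto {g : ℕ → ℝ} (hb : ∀ k, |g k| ≤ 1) {P : Set ℕ} (hP : P.Infinite) :
    ∃ Q, Q ⊆ P ∧ Q.Infinite ∧ ∃ L, Tendsto g (flt Q) (𝓝 L) := by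
  haveI := hP.to_subtype
  let e : ℕ → ℕ := fun n => (Nat.Subtype.orderIsoOfNat P n : ℕ)
  have he : StrictMono e := fun a b hab => (Nat.Subtype.orderIsoOfNat P).strictMono hab
  have hmem : ∀ n, g (e n) ∈ Set.Icc (-1 : ℝ) 1 := fun n => by
    have := abs_le.1 (hb (e n)); exact ⟨this.1, this.2⟩
  obtain ⟨L, _, φ, hφ, hten⟩ :=
    tendsto_subseq_of_bounded (Metric.isBounded_Icc (-1:ℝ) 1) hmem
  set ψ : ℕ → ℕ := e ∘ φ with hψ
  have hψm : StrictMono ψ := he.comp hφ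
  refine ⟨Set.range ψ, ?_, ?_, L, ?_⟩
  · rintro x ⟨n, rfl⟩; exact Subtype.mem _
  · exact infinite_range_of_injective hψm.injective
  · have hle : flt (Set.range ψ) ≤ map ψ atTop := by
      intro s hs
      rw [mem_map, mem_atTop_sets] at hs
      obtain ⟨n₀, hn₀⟩ := hs
      rw [mem_flt]
      refine (Set.finite_Iio n₀).image ψ |>.subset ?_
      rintro x ⟨⟨n, rfl⟩, hxs⟩
      refine ⟨n, ?_, rfl⟩
      by_contra hn
      exact hxs (hn₀ n (le_of_not_gt hn))
    exact (tendsto_map'_iff.2 (show Tendsto (g ∘ ψ) atTop (𝓝 L) from hten)).mono_left hle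

/-- Part B: diagonalization under `𝔭 = 𝔠`. -/
lemma partB (hp : pseudoIntersectionNumber = Cardinal.continuum)
    {I : Type} (hI : Cardinal.mk I < Cardinal.continuum)
    (f : I → ℕ → ℝ) (hf : ∀ i k, |f i k| ≤ 1)
    {S : Set ℕ} (hS : S.Infinite) :
    ∃ N, N ⊆ S ∧ N.Infinite ∧ ∀ i, ∃ L, Tendsto (f i) (flt N) (𝓝 L) := by
  classical
  letI r : I → I → Prop := WellOrderingRel
  haveI hwo : IsWellOrder I r := WellOrderingRel.isWellOrder
  let C : I → Set ℕ → Prop := fun i Q =>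
    Q ⊆ S ∧ Q.Infinite ∧ ∃ L, Tendsto (f i) (flt Q) (𝓝 L)
  let F : ∀ _ : I, (∀ y : I, Set ℕ) → Set ℕ := fun i prev =>
    if h : ∃ Q : Set ℕ, C i Q ∧ ∀ j, r j i → (Q \ prev j).Finite then h.choose else ∅
  let g : I → Set ℕ := IsWellFounded.fix r (fun i prev => F i (fun j => if h : r j i then prev j h else ∅))
  have geq : ∀ i, g i = F i (fun j => if h : r j i then g j else ∅) := fun i => by
    show IsWellFounded.fix r _ i = _
    rw [IsWellFounded.fix_eq]
  have hGood : ∀ i, C i (g i) ∧ ∀ j, r j i → (g i \ g j).Finite := by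
    intro i
    induction i using IsWellFounded.induction r with
    | _ x ih =>
      have hex : ∃ Q : Set ℕ, C x Q ∧ ∀ j, r j x → (Q \ (if h : r j x then g j else ∅) : Set ℕ).Finite := by
        set Fam : Set (Set ℕ) := (g '' {j | r j x}) ∪ {S} with hFam
        have hSF : S ∈ Fam := Or.inr rfl
        have hmemFam : ∀ j, r j x → g j ∈ Fam := fun j hj => Or.inl ⟨j, hj, rfl⟩
        have hinf : ∀ X ∈ Fam, X.Infinite := by
          rintro X (⟨j, hj, rfl⟩ | rfl)
          · exact (ih j hj).1.2.1
          · exact hS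
        have hch : ∀ X ∈ Fam, ∀ Y ∈ Fam, (X \ Y).Finite ∨ (Y \ X).Finite := by
          rintro X (⟨j, hj, rfl⟩ | rfl) Y (⟨j', hj', rfl⟩ | rfl)
          · rcases trichotomous_of r j j' with h | h | h
            · exact Or.inr ((ih j' hj').2 j h)
            · subst h; simp
            · exact Or.inl ((ih j hj).2 j' h)
          · exact Or.inl (by simpa [diff_eq_empty.2 (ih j hj).1.1] using Set.finite_empty)
          · exact Or.inr (by simpa [diff_eq_empty.2 (ih j' hj').1.1] using Set.finite_empty)
          · simp
        have hcard : Cardinal.mk Fam < pseudoIntersectionNumber := by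
          rw [hp]
          refine lt_of_le_of_lt (Cardinal.mk_union_le _ _) ?_
          refine Cardinal.add_lt_of_lt Cardinal.aleph0_le_continuum ?_ ?_
          · exact lt_of_le_of_lt (le_trans Cardinal.mk_image_le (Cardinal.mk_set_le _)) hI
          · exact lt_of_le_of_lt (le_of_eq (Cardinal.mk_singleton _))
              (lt_of_lt_of_le Cardinal.one_lt_aleph0 Cardinal.aleph0_le_continuum)
        obtain ⟨P, hPinf, hP⟩ :=
          hasPseudoIntersection_of_lt Fam (sfip_of_chain ⟨S, hSF⟩ hinf hch) hcard
        have hQ0 : (P ∩ S).Infinite := by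
          refine (hPinf.diff (hP S hSF)).mono ?_
          intro y hy
          rcases em (y ∈ S) with h | h
          · exact ⟨hy.1, h⟩
          · exact absurd ⟨hy.1, h⟩ hy.2
        obtain ⟨Q, hQP, hQinf, L, hQL⟩ := exists_subseq_tendsto (hf x) hQ0
        refine ⟨Q, ⟨fun y hy => (hQP hy).2, hQinf, L, hQL⟩, ?_⟩
        intro j hj
        rw [dif_pos hj]
        exact ((hP (g j) (hmemFam j hj)).subset
          (fun y hy => ⟨(hQP hy.1).1, hy.2⟩))
      have hgx : g x = hex.choose := by rw [geq x]; exact dif_pos hex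
      constructor
      · rw [hgx]; exact hex.choose_spec.1
      · intro j hj
        have := hex.choose_spec.2 j hj
        rw [dif_pos hj] at this
        rw [hgx]; exact this
  -- final pseudo-intersection
  set Fam : Set (Set ℕ) := (Set.range g) ∪ {S} with hFam
  have hSF : S ∈ Fam := Or.inr rfl
  have hinf : ∀ X ∈ Fam, X.Infinite := by
    rintro X (⟨j, rfl⟩ | rfl)
    · exact (hGood j).1.2.1
    · exact hS
  have hch : ∀ X ∈ Fam, ∀ Y ∈ Fam, (X \ Y).Finite ∨ (Y \ X).Finite := by
    rintro X (⟨j, rfl⟩ | rfl) Y (⟨j', rfl⟩ | rfl)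
    · rcases trichotomous_of r j j' with h | h | h
      · exact Or.inr ((hGood j').2 j h)
      · subst h; simp
      · exact Or.inl ((hGood j).2 j' h)
    · exact Or.inl (by simpa [diff_eq_empty.2 (hGood j).1.1] using Set.finite_empty)
    · exact Or.inr (by simpa [diff_eq_empty.2 (hGood j').1.1] using Set.finite_empty)
    · simp
  have hcard : Cardinal.mk Fam < pseudoIntersectionNumber := by
    rw [hp]
    refine lt_of_le_of_lt (Cardinal.mk_union_le _ _) ?_
    refine Cardinal.add_lt_of_lt Cardinal.aleph0_le_continuum ?_ ?_
    · exact lt_of_le_of_lt Cardinal.mk_range_le hI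
    · exact lt_of_le_of_lt (le_of_eq (Cardinal.mk_singleton _))
        (lt_of_lt_of_le Cardinal.one_lt_aleph0 Cardinal.aleph0_le_continuum)
  obtain ⟨P, hPinf, hP⟩ :=
    hasPseudoIntersection_of_lt Fam (sfip_of_chain ⟨S, hSF⟩ hinf hch) hcard
  refine ⟨P ∩ S, fun y hy => hy.2, ?_, ?_⟩
  · refine (hPinf.diff (hP S hSF)).mono ?_
    intro y hy
    rcases em (y ∈ S) with h | h
    · exact ⟨hy.1, h⟩
    · exact absurd ⟨hy.1, h⟩ hy.2
  · intro i
    obtain ⟨L, hL⟩ := (hGood i).1.2.2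
    refine ⟨L, hL.mono_left (flt_mono ?_)⟩
    exact ((hP (g i) (Or.inl ⟨i, rfl⟩)).subset (fun y hy => ⟨hy.1.1, hy.2⟩))

/-- Part C : the sparse interleaved sequence. -/
lemma partC (μ : ℕ → ℕ → ℝ) (hsum : ∀ n, Summable fun j => |μ n j|)
    (w : ℕ → ℝ) (hwsum : Summable fun j => |w j|)
    {Nstar : Set ℕ} (hNs : Nstar.Infinite)
    (hsing : ∀ j, Tendsto (fun k => μ k j) (flt Nstar) (𝓝 (w j))) :
    ∃ m : ℕ → ℕ, StrictMono m ∧ (∀ l, m l ∈ Nstar) ∧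
      (∀ l, (∑ i ∈ Finset.range l, |μ (m l) (m i) - w (m i)|) ≤ (1/2 : ℝ)^l) ∧
      (∀ l p, p < l → (∑' j, |μ (m p) (j + m l)|) ≤ (1/2 : ℝ)^l) ∧
      (∀ l, (∑' j, |w (j + m l)|) ≤ (1/2 : ℝ)^l) := by
  classical
  set P : ℕ → (ℕ → ℕ) → ℕ → Prop := fun l prev k =>
    k ∈ Nstar ∧ (∀ i, i < l → prev i < k) ∧
    ((∑ i ∈ Finset.range l, |μ k (prev i) - w (prev i)|) ≤ (1/2 : ℝ)^l) ∧
    (∀ p, p < l → (∑' j, |μ (prev p) (j + k)|) ≤ (1/2 : ℝ)^l) ∧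
    ((∑' j, |w (j + k)|) ≤ (1/2 : ℝ)^l) with hP
  let h : ℕ → ℕ → ℕ := fun l => Nat.rec (fun _ => 0)
    (fun l' hl' => fun j => if j = l' then sInf {k | P l' hl' k} else hl' j) l
  set m : ℕ → ℕ := fun l => h (l+1) l with hm
  have hagree : ∀ l j, j < l → h l j = m j := by
    intro l
    induction l with
    | zero => intro j hj; omega
    | succ l ih =>
      intro j hj
      rcases Nat.lt_succ_iff_lt_or_eq.1 hj with hj | rfl
      · have : h (l+1) j = h l j := if_neg (Nat.ne_of_lt hj)
        rw [this, ih j hj]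
      · rfl
  have hmdef : ∀ l, m l = sInf {k | P l (h l) k} := fun l => if_pos rfl
  -- main invariant
  have hQ : ∀ l, P l (h l) (m l) := by
    intro l
    induction l using Nat.strong_induction_on with
    | _ l ih =>
      -- every prev value below l equals m, and invariants hold
      have hmem : ∀ i, i < l → m i ∈ Nstar := fun i hi => by
        have := (ih i hi).1; exact this
      -- existence of a witness
      have hex : {k | P l (h l) k}.Nonempty := by
        -- tail bounds eventually
        have htail : ∀ᶠ k in atTop, (∀ p ∈ Finset.range l, (∑' j, |μ (m p) (j + k)|) ≤ (1/2 : ℝ)^l)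
            ∧ (∑' j, |w (j + k)|) ≤ (1/2 : ℝ)^l := by
          have hpos : (0:ℝ) < (1/2:ℝ)^l := by positivity
          refine Filter.Eventually.and ?_ ?_
          · rw [Finset.eventually_all _]
            intro p _
            have := tendsto_sum_nat_add (fun j => |μ (m p) j|)
            have := this.eventually (eventually_le_nhds hpos)
            exact this.mono (fun k hk => by
              calc ∑' j, |μ (m p) (j + k)| ≤ _ := hk)
          · have := (tendsto_sum_nat_add (fun j => |w j|)).eventually (eventually_le_nhds hpos)
            exact this.mono (fun k hk => hk)
        obtain ⟨R, hR⟩ := eventually_atTop.1 htail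
        -- head bound on a cofinite subset of Nstar
        have hδ : (0:ℝ) < (1/2:ℝ)^l / (l+1) := by positivity
        have hhead : ∀ᶠ k in flt Nstar, ∀ i ∈ Finset.range l,
            |μ k (m i) - w (m i)| < (1/2:ℝ)^l / (l+1) :=
          (Finset.eventually_all _).2 (fun i _ =>
            (hsing (m i)).eventually (eventually_abs_sub_lt (w (m i)) hδ))
        have hinf2 : (Nstar ∩ {k | ∀ i ∈ Finset.range l, |μ k (m i) - w (m i)| < (1/2:ℝ)^l / (l+1)}).Infinite := by
          have hfin : (Nstar \ {k | ∀ i ∈ Finset.range l, |μ k (m i) - w (m i)| < (1/2:ℝ)^l / (l+1)}).Finite :=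
            mem_flt.1 hhead
          refine (hNs.diff hfin).mono ?_
          intro x hx
          by_cases hxE : x ∈ {k | ∀ i ∈ Finset.range l, |μ k (m i) - w (m i)| < (1/2:ℝ)^l / (l+1)}
          · exact ⟨hx.1, hxE⟩
          · exact absurd ⟨hx.1, hxE⟩ hx.2
        obtain ⟨k, hk, hkgt⟩ := hinf2.exists_gt (R + (Finset.range l).sup m)
        refine ⟨k, hk.1, ?_, ?_, ?_, ?_⟩
        · intro i hi
          rw [hagree l i hi]
          have : m i ≤ (Finset.range l).sup m := Finset.le_sup (Finset.mem_range.2 hi)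
          omega
        · have : ∀ i ∈ Finset.range l, |μ k (h l i) - w (h l i)| ≤ (1/2:ℝ)^l / (l+1) := by
            intro i hi
            rw [hagree l i (Finset.mem_range.1 hi)]
            exact le_of_lt (hk.2 i hi)
          calc ∑ i ∈ Finset.range l, |μ k (h l i) - w (h l i)|
              ≤ ∑ _i ∈ Finset.range l, (1/2:ℝ)^l / (l+1) := Finset.sum_le_sum this
            _ = l * ((1/2:ℝ)^l / (l+1)) := by rw [Finset.sum_const, Finset.card_range]; ring
            _ ≤ (1/2:ℝ)^l := by
                rw [div_eq_mul_inv]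
                have h1 : (l:ℝ) ≤ (l+1 : ℝ) := by linarith
                have h2 : (0:ℝ) < (l+1:ℝ) := by positivity
                rw [mul_comm ((1/2:ℝ)^l) _, ← mul_assoc]
                have : (l:ℝ) * ((l:ℝ)+1)⁻¹ ≤ 1 := by
                  rw [mul_inv_le_iff₀ h2]; linarith
                nlinarith [pow_pos (by norm_num : (0:ℝ) < 1/2) l]
        · intro p hp
          rw [hagree l p hp]
          exact ((hR k (by omega)).1 p (Finset.mem_range.2 hp))
        · exact (hR k (by omega)).2
      rw [hmdef l]
      exact Nat.sInf_mem hex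
  have hmono : StrictMono m := by
    intro a b hab
    have := (hQ b).2.1 a hab
    rwa [hagree b a hab] at this
  refine ⟨m, hmono, fun l => (hQ l).1, ?_, ?_, fun l => (hQ l).2.2.2.2⟩
  · intro l
    have := (hQ l).2.2.1
    refine le_trans (le_of_eq ?_) this
    refine Finset.sum_congr rfl (fun i hi => ?_)
    rw [hagree l i (Finset.mem_range.1 hi)]
  · intro l p hp
    have := (hQ l).2.2.2.1 p hp
    rwa [hagree l p hp] at this

/-- Fact F: the total deviation estimate for the sparse sequence. -/
lemma factF (μ : ℕ → ℕ → ℝ) (hsum : ∀ n, Summable fun j => |μ n j|)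
    (w : ℕ → ℝ) (m : ℕ → ℕ)
    (head : ∀ l, (∑ i ∈ Finset.range l, |μ (m l) (m i) - w (m i)|) ≤ (1/2 : ℝ)^l)
    (tailμ : ∀ l p, p < l → (∑' j, |μ (m p) (j + m l)|) ≤ (1/2 : ℝ)^l)
    (tailw : ∀ l, (∑' j, |w (j + m l)|) ≤ (1/2 : ℝ)^l)
    (hwsum : Summable fun j => |w j|)
    (p : ℕ) (J : Set ℕ) (hJ : p ∉ J) :
    (∑' i, J.indicator (fun i => |μ (m p) (m i) - w (m i)|) i) ≤ 4 * (1/2 : ℝ)^p ∧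
      Summable (J.indicator (fun i => |μ (m p) (m i) - w (m i)|)) := by
  classical
  set G : ℕ → ℝ := fun i => |μ (m p) (m i) - w (m i)| with hG
  have hGnn : ∀ i, 0 ≤ G i := fun i => abs_nonneg _
  have hGbig : ∀ i, p < i → G i ≤ 2 * (1/2 : ℝ)^i := by
    intro i hi
    have h1 : |μ (m p) (m i)| ≤ (1/2 : ℝ)^i := by
      have hs : Summable (fun j => |μ (m p) (j + m i)|) :=
        (summable_nat_add_iff (m i)).2 (hsum (m p))
      have h0 := Summable.le_tsum hs 0 (fun j _ => abs_nonneg _)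
      rw [zero_add] at h0
      exact le_trans h0 (tailμ i p hi)
    have h2 : |w (m i)| ≤ (1/2 : ℝ)^i := by
      have hs : Summable (fun j => |w (j + m i)|) :=
        (summable_nat_add_iff (m i)).2 hwsum
      have h0 := Summable.le_tsum hs 0 (fun j _ => abs_nonneg _)
      rw [zero_add] at h0
      exact le_trans h0 (tailw i)
    calc G i ≤ |μ (m p) (m i)| + |w (m i)| := by have := abs_add_le (μ (m p) (m i)) (-(w (m i))); simpa [hG, sub_eq_add_neg] using this
      _ ≤ (1/2:ℝ)^i + (1/2:ℝ)^i := add_le_add h1 h2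
      _ = 2 * (1/2:ℝ)^i := by ring
  set H : ℕ → ℝ := fun i => if i < p then G i else if i = p then 0 else 2 * (1/2 : ℝ)^i with hH
  have hHnn : ∀ i, 0 ≤ H i := by
    intro i; rw [hH]; dsimp only
    split
    · exact hGnn i
    · split
      · exact le_refl 0
      · positivity
  have hle : ∀ i, J.indicator G i ≤ H i := by
    intro i
    rcases lt_trichotomy i p with h | rfl | h
    · simp only [hH]; rw [if_pos h]; exact Set.indicator_le_self' (fun x _ => hGnn x) i
    · have : J.indicator G i = 0 := Set.indicator_of_notMem hJ _
      rw [this, hH]; simp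
    · simp only [hH]; rw [if_neg (by omega), if_neg (by omega)]
      exact le_trans (Set.indicator_le_self' (fun x _ => hGnn x) i) (hGbig i h)
  have hHshift : ∀ n, H (n + (p+1)) = (2 * (1/2:ℝ)^(p+1)) * (1/2:ℝ)^n := by
    intro n
    rw [hH]; dsimp only
    rw [if_neg (by omega), if_neg (by omega), pow_add]
    ring
  have hHsum : Summable H := by
    rw [← summable_nat_add_iff (p+1)]
    refine Summable.congr ?_ (fun n => (hHshift n).symm)
    exact (summable_geometric_of_lt_one (by norm_num) (by norm_num)).mul_left _
  have hJsum : Summable (J.indicator G) :=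
    Summable.of_nonneg_of_le (fun i => Set.indicator_nonneg (fun x _ => hGnn x) i) hle hHsum
  refine ⟨?_, hJsum⟩
  have h1 : (∑' i, J.indicator G i) ≤ ∑' i, H i := Summable.tsum_le_tsum hle hJsum hHsum
  have h2 : (∑' i, H i) = (∑ i ∈ Finset.range (p+1), H i) + ∑' n, H (n + (p+1)) :=
    (Summable.sum_add_tsum_nat_add (p+1) hHsum).symm
  have h3 : (∑ i ∈ Finset.range (p+1), H i) ≤ (1/2:ℝ)^p := by
    rw [Finset.sum_range_succ]
    have hHp : H p = 0 := by rw [hH]; simp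
    rw [hHp, add_zero]
    refine le_trans (le_of_eq (Finset.sum_congr rfl (fun i hi => ?_))) (head p)
    rw [hH]; dsimp only; rw [if_pos (Finset.mem_range.1 hi)]
  have h4 : (∑' n, H (n + (p+1))) = 2 * (1/2:ℝ)^p := by
    rw [tsum_congr hHshift, tsum_mul_left, tsum_geometric_two]
    rw [pow_succ]; ring
  rw [h2, h4] at h1
  have : (1/2:ℝ)^p + 2*(1/2:ℝ)^p ≤ 4 * (1/2:ℝ)^p := by
    nlinarith [pow_pos (by norm_num : (0:ℝ) < 1/2) p]
  linarith

lemma l1Meas_eq (x : ℕ → ℝ) (B : Set ℕ) : l1Meas x B = ∑' j, B.indicator x j :=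
  tsum_subtype B x

lemma abs_indicator_le {x : ℕ → ℝ} (B : Set ℕ) (j : ℕ) : |B.indicator x j| ≤ |x j| := by
  by_cases h : j ∈ B <;> simp [Set.indicator_of_mem, Set.indicator_of_notMem, h, abs_nonneg]

lemma indicator_abs_summable {x : ℕ → ℝ} (hx : Summable fun j => |x j|) (B : Set ℕ) :
    Summable (fun j => |B.indicator x j|) :=
  Summable.of_nonneg_of_le (fun _ => abs_nonneg _) (fun j => abs_indicator_le B j) hx

lemma abs_l1Meas_le {x : ℕ → ℝ} (hx : Summable fun j => |x j|) (hb : (∑' j, |x j|) ≤ 1)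
    (B : Set ℕ) : |l1Meas x B| ≤ 1 := by
  rw [l1Meas_eq]
  have h1 := indicator_abs_summable hx B
  refine le_trans ?_ (le_trans (Summable.tsum_le_tsum (fun j => abs_indicator_le B j) h1 hx) hb)
  simpa [Real.norm_eq_abs] using norm_tsum_le_tsum_norm (f := B.indicator x) (by simpa [Real.norm_eq_abs] using h1)

lemma split_point {x : ℕ → ℝ} (hx : Summable x) (B : Set ℕ) (k : ℕ) :
    (∑' j, B.indicator x j) = (if k ∈ B then x k else 0) + ∑' j, ((B \ {k}).indicator x j) := by
  classical
  rw [Summable.tsum_eq_add_tsum_ite (hx.indicator B) k]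
  have h1 : B.indicator x k = (if k ∈ B then x k else 0) := by
    by_cases h : k ∈ B <;> simp [h]
  rw [h1]
  congr 1
  refine tsum_congr (fun j => ?_)
  by_cases hj : j = k
  · subst hj; simp
  · by_cases hjB : j ∈ B <;>
      simp [Set.indicator_apply, hj, hjB, Set.mem_diff]

lemma abs_sub_le' (x y : ℝ) : |x - y| ≤ |x| + |y| := by
  calc |x - y| = |x + (-y)| := by ring_nf
    _ ≤ |x| + |(-y)| := abs_add_le _ _
    _ = |x| + |y| := by rw [abs_neg]

/-- STATEMENT 14 (inductive step, Lemma `step` of the paper), assuming `𝔭 = 𝔠`. -/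
theorem stmt14
    (hp : pseudoIntersectionNumber = Cardinal.continuum)
    (𝔅 : Set (Set ℕ)) (h𝔅 : MeasureTheory.IsSetAlgebra 𝔅)
    (hfin : ∀ E : Set ℕ, E.Finite → E ∈ 𝔅)
    (hcard : Cardinal.mk 𝔅 < Cardinal.continuum)
    (S : Set ℕ) (hS : S.Infinite)
    (htriv : ∀ B ∈ 𝔅, (B ∩ S).Finite ∨ (S \ B).Finite)
    (μ : ℕ → ℕ → ℝ)
    (hsum : ∀ n, Summable fun j => |μ n j|)
    (hball : ∀ n, (∑' j, |μ n j|) ≤ 1)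
    (c : ℝ) (hc : 0 < c)
    (hlarge : ∀ k ∈ S, c ≤ |μ k k|)
    (ε : ℝ) (hε : 0 < ε) :
    ∃ N T : Set ℕ, N ⊆ S ∧ T ⊆ S ∧ N.Infinite ∧ T.Infinite ∧ Disjoint N T ∧
    ∃ A : Fin 3 → Set ℕ,
      (∀ i, A i ⊆ N) ∧ (∀ i, (A i).Infinite) ∧
      (∀ i j, i ≠ j → Disjoint (A i) (A j)) ∧
      -- (i): `(μ_k)_{k ∈ N}` converges in variation norm on `T`
      (∀ δ > (0 : ℝ), ∃ n₀ : ℕ, ∀ k ∈ N, ∀ m ∈ N, n₀ ≤ k → n₀ ≤ m →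
        (∑' j : T, |μ k j - μ m j|) < δ) ∧
      -- (ii): a `(c, ε)`-fork in the closure of `{μ_k : k ∈ N}` in `M(𝔅′)`, where
      -- `𝔅′ = ⟨𝔅 ∪ {A₀, A₁, A₂}⟩` and `x_i` is the unique nonprincipal ultrafilter
      -- containing `A i`, whose Dirac measure on `𝔅′` is `B ↦ 1` iff `A i ⊆* B`.
      (let 𝔅' := MeasureTheory.generateSetAlgebra (𝔅 ∪ Set.range A)
       let dirac : Fin 3 → Set ℕ → ℝ := fun i B => if (A i \ B).Finite then 1 else 0
       (∀ i j, i ≠ j → dirac i ≠ dirac j) ∧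
       ∃ (b : ℝ) (ν : Fin 3 → Set ℕ → ℝ),
         c ≤ |b| ∧
         (∀ i, IsClusterPtOnIn μ N 𝔅' (fun B => b * dirac i B + ν i B)) ∧
         (∀ i j, ∀ B ∈ 𝔅', |ν i B - ν j B| + |ν i Bᶜ - ν j Bᶜ| ≤ ε)) := by
  classical
  have hμsum : ∀ n, Summable (μ n) := fun n => (hsum n).of_abs
  have habs1 : ∀ n j, |μ n j| ≤ 1 := fun n j =>
    le_trans (Summable.le_tsum (hsum n) j (fun _ _ => abs_nonneg _)) (hball n)
  have hl1le : ∀ n B, |l1Meas (μ n) B| ≤ 1 := fun n B => abs_l1Meas_le (hsum n) (hball n) B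
  -- Part B
  set fI : (↥𝔅 ⊕ (ℕ ⊕ Bool)) → ℕ → ℝ := fun i k =>
    match i with
    | Sum.inl B => l1Meas (μ k) (B : Set ℕ)
    | Sum.inr (Sum.inl j) => μ k j
    | Sum.inr (Sum.inr true) => l1Meas (μ k) Set.univ
    | Sum.inr (Sum.inr false) => μ k k
    with hfIdef
  have hIcard : Cardinal.mk (↥𝔅 ⊕ (ℕ ⊕ Bool)) < Cardinal.continuum := by
    rw [Cardinal.mk_sum, Cardinal.lift_id, Cardinal.lift_id]
    exact Cardinal.add_lt_of_lt Cardinal.aleph0_le_continuum hcard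
      (lt_of_le_of_lt Cardinal.mk_le_aleph0 Cardinal.aleph0_lt_continuum)
  have hfIb : ∀ i k, |fI i k| ≤ 1 := by
    rintro (B | (j | t)) k
    · exact hl1le k B
    · exact habs1 k j
    · cases t
      · exact habs1 k k
      · exact hl1le k Set.univ
  obtain ⟨Nstar, hNstarS, hNstarInf, hconv⟩ := partB hp hIcard fI hfIb hS
  choose LI hLI using hconv
  set w : ℕ → ℝ := fun j => LI (Sum.inr (Sum.inl j)) with hwdef
  set b : ℝ := LI (Sum.inr (Sum.inr false)) with hbdef
  have hwten : ∀ j, Tendsto (fun k => μ k j) (flt Nstar) (𝓝 (w j)) :=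
    fun j => hLI (Sum.inr (Sum.inl j))
  have hbten : Tendsto (fun k => μ k k) (flt Nstar) (𝓝 b) := hLI (Sum.inr (Sum.inr false))
  have htotten : Tendsto (fun k => l1Meas (μ k) Set.univ) (flt Nstar)
      (𝓝 (LI (Sum.inr (Sum.inr true)))) := hLI (Sum.inr (Sum.inr true))
  have hBten : ∀ (B : Set ℕ) (hB : B ∈ 𝔅), Tendsto (fun k => l1Meas (μ k) B) (flt Nstar)
      (𝓝 (LI (Sum.inl ⟨B, hB⟩))) := fun B hB => hLI (Sum.inl ⟨B, hB⟩)
  haveI hNB : (flt Nstar).NeBot := flt_neBot hNstarInf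
  have hwsum : Summable (fun j => |w j|) := by
    refine summable_of_sum_range_le (c := 1) (fun _ => abs_nonneg _) (fun n => ?_)
    have ht : Tendsto (fun k => ∑ j ∈ Finset.range n, |μ k j|) (flt Nstar)
        (𝓝 (∑ j ∈ Finset.range n, |w j|)) :=
      tendsto_finset_sum _ (fun j _ => (hwten j).abs)
    refine le_of_tendsto ht (Filter.Eventually.of_forall (fun k => ?_))
    exact le_trans (Summable.sum_le_tsum _ (fun j _ => abs_nonneg _) (hsum k)) (hball k)
  -- Part C
  obtain ⟨m, hmono, hmN, head, tailμ, tailw⟩ := partC μ hsum w hwsum hNstarInf hwten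
  have hminj : Function.Injective m := hmono.injective
  have hmS : ∀ l, m l ∈ S := fun l => hNstarS (hmN l)
  -- the sets
  set N : Set ℕ := Set.range (fun t => m (2*t)) with hNdef
  set T : Set ℕ := Set.range (fun t => m (2*t+1)) with hTdef
  set A : Fin 3 → Set ℕ := fun i => Set.range (fun t => m (2*(3*t + (i : ℕ)))) with hAdef
  have hNS : N ⊆ S := by rintro x ⟨t, rfl⟩; exact hmS _
  have hTS : T ⊆ S := by rintro x ⟨t, rfl⟩; exact hmS _
  have hNinf : N.Infinite :=
    Set.infinite_range_of_injective (fun a b h => by have := hminj h; omega)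
  have hTinf : T.Infinite :=
    Set.infinite_range_of_injective (fun a b h => by have := hminj h; omega)
  have hNT : Disjoint N T := by
    rw [Set.disjoint_left]
    rintro x ⟨t, rfl⟩ ⟨s, hs⟩
    have := hminj hs; omega
  have hAN : ∀ i, A i ⊆ N := by
    rintro i x ⟨t, rfl⟩; exact ⟨3*t + (i:ℕ), rfl⟩
  have hAinf : ∀ i, (A i).Infinite := fun i =>
    Set.infinite_range_of_injective (fun a b h => by have := hminj h; omega)
  have hAdisj : ∀ i j, i ≠ j → Disjoint (A i) (A j) := by
    intro i j hij
    rw [Set.disjoint_left]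
    rintro x ⟨t, rfl⟩ ⟨s, hs⟩
    have h1 := hminj hs
    have h2 : (i:ℕ) ≠ (j:ℕ) := fun h => hij (Fin.val_injective h)
    have h3 := i.isLt
    have h4 := j.isLt
    omega
  have hNsubNstar : N ⊆ Nstar := by rintro x ⟨t, rfl⟩; exact hmN _
  have hfltNle : flt N ≤ flt Nstar := flt_mono (by rw [diff_eq_empty.2 hNsubNstar]; exact finite_empty)
  have hbtenN : Tendsto (fun k => μ k k) (flt N) (𝓝 b) := hbten.mono_left hfltNle
  haveI hNBN : (flt N).NeBot := flt_neBot hNinf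
  -- key estimates
  have key2 : ∀ p (B : Set ℕ), B ⊆ Set.range m → m p ∉ B →
      (∑' j, B.indicator (fun j => |μ (m p) j - w j|) j) ≤ 4 * (1/2:ℝ)^p ∧
        Summable (B.indicator (fun j => |μ (m p) j - w j|)) := by
    intro p B hBm hpB
    set D : ℕ → ℝ := fun j => |μ (m p) j - w j| with hD
    set J : Set ℕ := m ⁻¹' B with hJ
    have hpJ : p ∉ J := hpB
    have hfact := factF μ hsum w m head tailμ tailw hwsum p J hpJ
    have hre : (∑' i, J.indicator (fun i => |μ (m p) (m i) - w (m i)|) i)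
        = ∑' j, B.indicator D j := by
      have hsupp : Function.support (B.indicator D) ⊆ Set.range m := by
        intro j hj
        have hjB : j ∈ B := by
          by_contra h; exact hj (Set.indicator_of_notMem h _)
        exact hBm hjB
      rw [← hminj.tsum_eq (f := B.indicator D) hsupp]
      refine tsum_congr (fun i => ?_)
      by_cases h : m i ∈ B
      · rw [Set.indicator_of_mem h, Set.indicator_of_mem (show i ∈ J from h)]
      · rw [Set.indicator_of_notMem h, Set.indicator_of_notMem (show i ∉ J from h)]
    constructor
    · rw [← hre]; exact hfact.1
    · refine Summable.of_nonneg_of_le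
        (fun j => Set.indicator_nonneg (fun x _ => abs_nonneg _) j)
        (fun j => ?_) ((hsum (m p)).add hwsum)
      have hDle : D j ≤ |μ (m p) j| + |w j| := abs_sub_le' _ _
      exact le_trans (Set.indicator_le_self' (fun x _ => abs_nonneg _) j) hDle
  have key : ∀ p (B : Set ℕ), B ⊆ Set.range m → m p ∉ B →
      |(∑' j, B.indicator (μ (m p)) j) - (∑' j, B.indicator w j)| ≤ 4 * (1/2:ℝ)^p := by
    intro p B hBm hpB
    have k2 := key2 p B hBm hpB
    have hsummu : Summable (B.indicator (μ (m p))) := (hμsum (m p)).indicator B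
    have hsumw2 : Summable (B.indicator w) := (hwsum.of_abs).indicator B
    have habsd : Summable (fun j => |B.indicator (μ (m p)) j - B.indicator w j|) := by
      refine Summable.of_nonneg_of_le (fun _ => abs_nonneg _) (fun j => ?_) k2.2
      by_cases h : j ∈ B <;>
        simp [Set.indicator_of_mem, Set.indicator_of_notMem, h, abs_nonneg]
    have h1 : (∑' j, B.indicator (μ (m p)) j) - (∑' j, B.indicator w j)
        = ∑' j, (B.indicator (μ (m p)) j - B.indicator w j) := (Summable.tsum_sub hsummu hsumw2).symm
    rw [h1]
    have h2 : |∑' j, (B.indicator (μ (m p)) j - B.indicator w j)|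
        ≤ ∑' j, |B.indicator (μ (m p)) j - B.indicator w j| := by
      simpa [Real.norm_eq_abs] using
        norm_tsum_le_tsum_norm (f := fun j => B.indicator (μ (m p)) j - B.indicator w j)
          (by simpa [Real.norm_eq_abs] using habsd)
    refine le_trans h2 (le_trans (Summable.tsum_le_tsum (fun j => ?_) habsd k2.2) k2.1)
    by_cases h : j ∈ B
    · simp [Set.indicator_of_mem h]
    · simp [Set.indicator_of_notMem h]
  -- condition (i)
  have condI : ∀ δ > (0 : ℝ), ∃ n₀ : ℕ, ∀ k ∈ N, ∀ k' ∈ N, n₀ ≤ k → n₀ ≤ k' →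
      (∑' j : T, |μ k j - μ k' j|) < δ := by
    intro δ hδ
    have hTm : T ⊆ Set.range m := by rintro x ⟨t, rfl⟩; exact ⟨2*t+1, rfl⟩
    have hTsum : ∀ p, p % 2 = 0 → (∑' j : T, |μ (m p) j - w j|) ≤ 4 * (1/2:ℝ)^p := by
      intro p hpe
      have hpT : m p ∉ T := by rintro ⟨t, ht⟩; have := hminj ht; omega
      have k2 := key2 p T hTm hpT
      calc (∑' j : T, |μ (m p) (j:ℕ) - w (j:ℕ)|)
          = ∑' j, T.indicator (fun j => |μ (m p) j - w j|) j :=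
            tsum_subtype T (fun j => |μ (m p) j - w j|)
        _ ≤ 4 * (1/2:ℝ)^p := k2.1
    have hTsummable : ∀ p, p % 2 = 0 → Summable (fun j : T => |μ (m p) ↑j - w ↑j|) := by
      intro p hpe
      have hpT : m p ∉ T := by rintro ⟨t, ht⟩; have := hminj ht; omega
      have k2 := key2 p T hTm hpT
      rw [← summable_subtype_iff_indicator] at k2
      exact k2.2
    obtain ⟨n, hn⟩ := exists_pow_lt_of_lt_one (show (0:ℝ) < δ/8 by linarith)
      (by norm_num : (1/2:ℝ) < 1)
    refine ⟨m n, ?_⟩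
    rintro k hk k' hk' hkn hk'n
    obtain ⟨t, rfl⟩ := hk
    obtain ⟨u, rfl⟩ := hk'
    have htn : n ≤ 2*t := hmono.le_iff_le.1 hkn
    have hun : n ≤ 2*u := hmono.le_iff_le.1 hk'n
    have hb1 := hTsum (2*t) (by omega)
    have hb2 := hTsum (2*u) (by omega)
    have hs1 := hTsummable (2*t) (by omega)
    have hs2 := hTsummable (2*u) (by omega)
    have hsboth : Summable (fun j : T => |μ (m (2*t)) ↑j - w ↑j| + |μ (m (2*u)) ↑j - w ↑j|) :=
      hs1.add hs2
    have hsmall : Summable (fun j : T => |μ (m (2*t)) ↑j - μ (m (2*u)) ↑j|) := by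
      refine Summable.of_nonneg_of_le (fun _ => abs_nonneg _) (fun j => ?_) hsboth
      have h3 : μ (m (2*t)) ↑j - μ (m (2*u)) ↑j
          = (μ (m (2*t)) ↑j - w ↑j) - (μ (m (2*u)) ↑j - w ↑j) := by ring
      rw [h3]
      exact abs_sub_le' _ _
    have hle : (∑' j : T, |μ (m (2*t)) ↑j - μ (m (2*u)) ↑j|)
        ≤ (∑' j : T, |μ (m (2*t)) ↑j - w ↑j|) + (∑' j : T, |μ (m (2*u)) ↑j - w ↑j|) := by
      rw [← Summable.tsum_add hs1 hs2]
      refine Summable.tsum_le_tsum (fun j => ?_) hsmall hsboth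
      have h3 : μ (m (2*t)) ↑j - μ (m (2*u)) ↑j
          = (μ (m (2*t)) ↑j - w ↑j) - (μ (m (2*u)) ↑j - w ↑j) := by ring
      rw [h3]
      exact abs_sub_le' _ _
    have hpow1 : (1/2:ℝ)^(2*t) ≤ (1/2:ℝ)^n :=
      pow_le_pow_of_le_one (by norm_num) (by norm_num) (by omega)
    have hpow2 : (1/2:ℝ)^(2*u) ≤ (1/2:ℝ)^n :=
      pow_le_pow_of_le_one (by norm_num) (by norm_num) (by omega)
    calc (∑' j : T, |μ (m (2*t)) ↑j - μ (m (2*u)) ↑j|)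
        ≤ (∑' j : T, |μ (m (2*t)) ↑j - w ↑j|) + (∑' j : T, |μ (m (2*u)) ↑j - w ↑j|) := hle
      _ ≤ 4 * (1/2:ℝ)^(2*t) + 4 * (1/2:ℝ)^(2*u) := add_le_add hb1 hb2
      _ ≤ 8 * (1/2:ℝ)^n := by linarith
      _ < δ := by linarith
  -- ρ and its convergence
  set ρ : ℕ → Set ℕ → ℝ := fun k B => l1Meas (μ k) B - μ k k * (if k ∈ B then 1 else 0) with hρdef
  have tendsto_even : ∀ (g : ℕ → ℝ) (L C : ℝ), 0 ≤ C →
      (∀ t, |g (m (2*t)) - L| ≤ C * (1/2:ℝ)^(2*t)) → Tendsto g (flt N) (𝓝 L) := by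
    intro g L C hC hbd
    rw [Metric.tendsto_nhds]
    intro ε₀ hε₀
    have hpos : (0:ℝ) < ε₀ / (C+1) := by positivity
    obtain ⟨n, hn⟩ := exists_pow_lt_of_lt_one hpos (by norm_num : (1/2:ℝ) < 1)
    have hmem : {k | dist (g k) L < ε₀} ∈ flt N := by
      rw [mem_flt]
      refine ((Set.finite_Iio n).image (fun t => m (2*t))).subset ?_
      rintro x ⟨hxN, hxbad⟩
      obtain ⟨t, rfl⟩ := hxN
      refine ⟨t, ?_, rfl⟩
      simp only [Set.mem_Iio]
      by_contra ht
      push_neg at ht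
      apply hxbad
      simp only [Set.mem_setOf_eq, Real.dist_eq]
      have h1 : (1/2:ℝ)^(2*t) ≤ (1/2:ℝ)^n :=
        pow_le_pow_of_le_one (by norm_num) (by norm_num) (by omega)
      have h2 := hbd t
      have h6 : C * (1/2:ℝ)^(2*t) ≤ C * (1/2:ℝ)^n := mul_le_mul_of_nonneg_left h1 hC
      have h7 : C * (1/2:ℝ)^n ≤ (C+1) * (1/2:ℝ)^n := by
        have h5 : (0:ℝ) < (1/2:ℝ)^n := by positivity
        nlinarith
      have h8 : (C+1) * (1/2:ℝ)^n < (C+1) * (ε₀/(C+1)) :=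
        mul_lt_mul_of_pos_left hn (by linarith)
      have h9 : (C+1) * (ε₀/(C+1)) = ε₀ := by field_simp
      linarith
    exact hmem
  have hCN : ∀ B : Set ℕ, B ⊆ N →
      Tendsto (fun k => ρ k B) (flt N) (𝓝 (∑' j, B.indicator w j)) := by
    intro B hBN
    refine tendsto_even _ _ 5 (by norm_num) ?_
    intro t
    set p := 2*t with hpdef
    have hkB' : m p ∉ B \ {m p} := fun h => h.2 rfl
    have hBm : B \ {m p} ⊆ Set.range m := by
      intro x hx
      obtain ⟨s, rfl⟩ := hBN hx.1
      exact ⟨2*s, rfl⟩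
    have hkey := key p (B \ {m p}) hBm hkB'
    have hρeq : ρ (m p) B = ∑' j, (B \ {m p}).indicator (μ (m p)) j := by
      simp only [hρdef]
      rw [l1Meas_eq, split_point (hμsum (m p)) B (m p)]
      have hmul : (if m p ∈ B then μ (m p) (m p) else 0)
          = μ (m p) (m p) * (if m p ∈ B then 1 else 0) := by
        by_cases h : m p ∈ B <;> simp [h]
      rw [hmul]; ring
    have hweq : (∑' j, B.indicator w j)
        = (if m p ∈ B then w (m p) else 0) + ∑' j, (B \ {m p}).indicator w j :=
      split_point (hwsum.of_abs) B (m p)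
    have hwk : |w (m p)| ≤ (1/2:ℝ)^p := by
      have hsw : Summable (fun j => |w (j + m p)|) := (summable_nat_add_iff (m p)).2 hwsum
      have h0 := Summable.le_tsum hsw 0 (fun j _ => abs_nonneg _)
      rw [zero_add] at h0
      exact le_trans h0 (tailw p)
    have hite : |(if m p ∈ B then w (m p) else 0)| ≤ (1/2:ℝ)^p := by
      by_cases h : m p ∈ B
      · simpa [h] using hwk
      · simp only [h, if_false, abs_zero]; positivity
    rw [hρeq, hweq]
    have habc : (∑' j, (B \ {m p}).indicator (μ (m p)) j)
        - ((if m p ∈ B then w (m p) else 0) + ∑' j, (B \ {m p}).indicator w j)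
        = ((∑' j, (B \ {m p}).indicator (μ (m p)) j) - (∑' j, (B \ {m p}).indicator w j))
          - (if m p ∈ B then w (m p) else 0) := by ring
    rw [habc]
    have htri : |((∑' j, (B \ {m p}).indicator (μ (m p)) j) - (∑' j, (B \ {m p}).indicator w j))
        - (if m p ∈ B then w (m p) else 0)|
        ≤ |(∑' j, (B \ {m p}).indicator (μ (m p)) j) - (∑' j, (B \ {m p}).indicator w j)|
          + |(if m p ∈ B then w (m p) else 0)| := by
      exact abs_sub_le' _ _
    calc _ ≤ _ := htri
      _ ≤ 4 * (1/2:ℝ)^p + (1/2:ℝ)^p := add_le_add hkey hite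
      _ = 5 * (1/2:ℝ)^p := by ring
  have hitecases : ∀ (B : Set ℕ), B ∈ 𝔅 → ∃ e : ℝ,
      Tendsto (fun k => (if k ∈ B then (1:ℝ) else 0)) (flt N) (𝓝 e) := by
    intro B hB
    rcases htriv B hB with h | h
    · refine ⟨0, Tendsto.congr' ?_ tendsto_const_nhds⟩
      have hmem : {k | (if k ∈ B then (1:ℝ) else 0) = 0} ∈ flt N := by
        rw [mem_flt]
        refine h.subset ?_
        intro x hx
        have hxS : x ∈ S := hNS hx.1
        by_cases hxB : x ∈ B
        · exact ⟨hxB, hxS⟩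
        · exact absurd (by simp [hxB]) hx.2
      exact Filter.eventuallyEq_of_mem hmem (fun x hx => hx.symm)
    · refine ⟨1, Tendsto.congr' ?_ tendsto_const_nhds⟩
      have hmem : {k | (if k ∈ B then (1:ℝ) else 0) = 1} ∈ flt N := by
        rw [mem_flt]
        refine h.subset ?_
        intro x hx
        have hxS : x ∈ S := hNS hx.1
        by_cases hxB : x ∈ B
        · exact absurd (by simp [hxB]) hx.2
        · exact ⟨hxS, hxB⟩
      exact Filter.eventuallyEq_of_mem hmem (fun x hx => hx.symm)
  have hCB : ∀ B ∈ 𝔅, ∃ L, Tendsto (fun k => ρ k B) (flt N) (𝓝 L) := by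
    intro B hB
    obtain ⟨e, he⟩ := hitecases B hB
    refine ⟨LI (Sum.inl ⟨B, hB⟩) - b * e, ?_⟩
    have hten := (((hBten B hB).mono_left hfltNle).sub (hbtenN.mul he))
    refine hten.congr (fun k => ?_)
    simp only [hρdef]
  have hCuniv : ∃ L, Tendsto (fun k => ρ k Set.univ) (flt N) (𝓝 L) := by
    refine ⟨LI (Sum.inr (Sum.inr true)) - b * 1, ?_⟩
    have h1 : (fun k => ρ k Set.univ) = fun k => l1Meas (μ k) Set.univ - μ k k * 1 := by
      funext k; simp only [hρdef]; norm_num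
    rw [h1]
    exact ((htotten.mono_left hfltNle)).sub (hbtenN.mul tendsto_const_nhds)
  have hρadd : ∀ (B C : Set ℕ), Disjoint B C → ∀ k, ρ k (B ∪ C) = ρ k B + ρ k C := by
    intro B C hdisj k
    simp only [hρdef]
    have h1 : l1Meas (μ k) (B ∪ C) = l1Meas (μ k) B + l1Meas (μ k) C := by
      rw [l1Meas_eq, l1Meas_eq, l1Meas_eq, Set.indicator_union_of_disjoint hdisj]
      exact Summable.tsum_add ((hμsum k).indicator B) ((hμsum k).indicator C)
    rw [h1]
    by_cases hB : k ∈ B <;> by_cases hC : k ∈ C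
    · exact absurd hC (Set.disjoint_left.1 hdisj hB)
    · simp only [Set.mem_union, hB, hC, or_false, if_true, if_false]
      ring
    · simp only [Set.mem_union, hB, hC, false_or, if_true, if_false]
      ring
    · simp only [Set.mem_union, hB, hC, or_self, if_false]
      ring
  have hmodN : ∀ B ∈ generateSetAlgebra (𝔅 ∪ Set.range A), ∃ B₀ ∈ 𝔅, B \ N = B₀ \ N := by
    intro B hB
    induction hB with
    | base s hs =>
      rcases hs with hs | hs
      · exact ⟨s, hs, rfl⟩
      · obtain ⟨i, rfl⟩ := hs
        refine ⟨∅, hfin ∅ finite_empty, ?_⟩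
        rw [diff_eq_empty.2 (hAN i)]
        simp
    | empty => exact ⟨∅, hfin ∅ finite_empty, by simp⟩
    | compl s hs ih =>
      obtain ⟨B₀, hB₀, hEq⟩ := ih
      refine ⟨B₀ᶜ, h𝔅.compl_mem hB₀, ?_⟩
      ext x
      simp only [Set.mem_diff, Set.mem_compl_iff]
      constructor
      · rintro ⟨hxs, hxN⟩
        refine ⟨fun hxB₀ => hxs ?_, hxN⟩
        have hx2 : x ∈ B₀ \ N := ⟨hxB₀, hxN⟩
        rw [← hEq] at hx2
        exact hx2.1
      · rintro ⟨hxB₀, hxN⟩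
        refine ⟨fun hxs => hxB₀ ?_, hxN⟩
        have hx2 : x ∈ s \ N := ⟨hxs, hxN⟩
        rw [hEq] at hx2
        exact hx2.1
    | union s t hs ht ihs iht =>
      obtain ⟨B₀, hB₀, hEq⟩ := ihs
      obtain ⟨C₀, hC₀, hEq'⟩ := iht
      refine ⟨B₀ ∪ C₀, h𝔅.union_mem hB₀ hC₀, ?_⟩
      rw [Set.union_diff_distrib, Set.union_diff_distrib, hEq, hEq']
  have hC' : ∀ B ∈ generateSetAlgebra (𝔅 ∪ Set.range A),
      ∃ L, Tendsto (fun k => ρ k B) (flt N) (𝓝 L) := by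
    intro B hB
    obtain ⟨B₀, hB₀, hEq⟩ := hmodN B hB
    obtain ⟨L1, hL1⟩ := hCB B₀ hB₀
    have hL2 := hCN (B₀ ∩ N) inter_subset_right
    have hL3 := hCN (B ∩ N) inter_subset_right
    have hdisj1 : Disjoint (B ∩ N) (B \ N) :=
      Set.disjoint_left.2 (fun x hx1 hx2 => hx2.2 hx1.2)
    have hdisj2 : Disjoint (B₀ ∩ N) (B₀ \ N) :=
      Set.disjoint_left.2 (fun x hx1 hx2 => hx2.2 hx1.2)
    have hsplitB : ∀ k, ρ k B = ρ k (B ∩ N) + ρ k (B \ N) := by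
      intro k
      conv_lhs => rw [← Set.inter_union_diff B N]
      exact hρadd _ _ hdisj1 k
    have hsplitB₀ : ∀ k, ρ k B₀ = ρ k (B₀ ∩ N) + ρ k (B₀ \ N) := by
      intro k
      conv_lhs => rw [← Set.inter_union_diff B₀ N]
      exact hρadd _ _ hdisj2 k
    refine ⟨(∑' j, (B ∩ N).indicator w j) + (L1 - (∑' j, (B₀ ∩ N).indicator w j)), ?_⟩
    have hfun : (fun k => ρ k B) = fun k => ρ k (B ∩ N) + (ρ k B₀ - ρ k (B₀ ∩ N)) := by
      funext k
      have h1 := hsplitB k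
      have h2 := hsplitB₀ k
      have h3 : ρ k (B \ N) = ρ k (B₀ \ N) := by rw [hEq]
      rw [h1, h3]
      linarith
    rw [hfun]
    exact hL3.add (hL1.sub hL2)
  choose Lf hLf using hC'
  have htrivA : ∀ (i : Fin 3), ∀ B ∈ generateSetAlgebra (𝔅 ∪ Set.range A),
      (B ∩ A i).Finite ∨ (A i \ B).Finite := by
    intro i B hB
    induction hB with
    | base s hs =>
      rcases hs with hs | hs
      · rcases htriv s hs with h | h
        · exact Or.inl (h.subset (fun x hx => ⟨hx.1, hNS (hAN i hx.2)⟩))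
        · exact Or.inr (h.subset (fun x hx => ⟨hNS (hAN i hx.1), hx.2⟩))
      · obtain ⟨j, rfl⟩ := hs
        by_cases hij : j = i
        · subst hij
          exact Or.inr (by simp)
        · refine Or.inl ?_
          rw [Set.disjoint_iff_inter_eq_empty.1 (hAdisj j i hij)]
          exact finite_empty
    | empty => exact Or.inl (by simp)
    | compl s hs ih =>
      rcases ih with h | h
      · refine Or.inr (h.subset ?_)
        intro x hx
        rw [Set.mem_diff, Set.mem_compl_iff, not_not] at hx
        exact ⟨hx.2, hx.1⟩
      · refine Or.inl (h.subset ?_)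
        intro x hx
        rw [Set.mem_inter_iff, Set.mem_compl_iff] at hx
        exact ⟨hx.2, hx.1⟩
    | union s t hs ht ihs iht =>
      rcases ihs with h1 | h1
      · rcases iht with h2 | h2
        · refine Or.inl ((h1.union h2).subset ?_)
          intro x hx
          rcases hx.1 with h | h
          · exact Or.inl ⟨h, hx.2⟩
          · exact Or.inr ⟨h, hx.2⟩
        · exact Or.inr (h2.subset (fun x hx => ⟨hx.1, fun h => hx.2 (Or.inr h)⟩))
      · exact Or.inr (h1.subset (fun x hx => ⟨hx.1, fun h => hx.2 (Or.inl h)⟩))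
  -- ultrafilters
  have hUi : ∀ i : Fin 3, ∃ U : Ultrafilter ℕ, (U : Filter ℕ) ≤ flt (A i) := by
    intro i
    haveI := flt_neBot (hAinf i)
    exact ⟨Ultrafilter.of (flt (A i)), Ultrafilter.of_le _⟩
  choose U hU using hUi
  have hUcof : ∀ i, (U i : Filter ℕ) ≤ cofinite := fun i => le_trans (hU i) (flt_le_cofinite _)
  have hAiU : ∀ i, A i ∈ U i := fun i => hU i (mem_flt.2 (by simp))
  have hNU : ∀ i, N ∈ U i := fun i => Filter.mem_of_superset (hAiU i) (hAN i)
  have hUleN : ∀ i, (U i : Filter ℕ) ≤ flt N :=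
    fun i => le_inf (hUcof i) (le_principal_iff.2 (hNU i))
  have hUinf : ∀ i, ∀ s ∈ U i, s.Infinite := by
    intro i s hs
    by_contra hfin
    rw [Set.not_infinite] at hfin
    have h1 : sᶜ ∈ U i := hUcof i (by rw [mem_cofinite, compl_compl]; exact hfin)
    have h2 : s ∩ sᶜ ∈ U i := Filter.inter_mem hs h1
    rw [Set.inter_compl_self] at h2
    exact Filter.empty_notMem _ h2
  -- chosen limits along ultrafilters
  have hlamex : ∀ (i : Fin 3) (B : Set ℕ),
      ∃ x, Tendsto (fun k => l1Meas (μ k) B) (U i) (𝓝 x) := by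
    intro i B
    have hle : ((U i).map (fun k => l1Meas (μ k) B) : Filter ℝ) ≤ 𝓟 (Set.Icc (-1) 1) := by
      rw [Ultrafilter.coe_map, le_principal_iff, mem_map]
      refine Filter.univ_mem' (fun k => ?_)
      have := hl1le k B
      rw [abs_le] at this
      exact ⟨this.1, this.2⟩
    obtain ⟨x, _, hx⟩ := (isCompact_Icc (a := (-1:ℝ)) (b := 1)).ultrafilter_le_nhds
      ((U i).map (fun k => l1Meas (μ k) B)) hle
    exact ⟨x, by rwa [Ultrafilter.coe_map] at hx⟩
  choose lam hlam using hlamex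
  set dirac : Fin 3 → Set ℕ → ℝ := fun i B => if (A i \ B).Finite then 1 else 0 with hdiracdef
  have hmain : ∀ (i : Fin 3) (B) (hB : B ∈ generateSetAlgebra (𝔅 ∪ Set.range A)),
      Tendsto (fun k => l1Meas (μ k) B) (U i) (𝓝 (Lf B hB + b * dirac i B)) := by
    intro i B hB
    have h1 : Tendsto (fun k => ρ k B) (U i) (𝓝 (Lf B hB)) := (hLf B hB).mono_left (hUleN i)
    have h2 : Tendsto (fun k => μ k k) (U i) (𝓝 b) := hbtenN.mono_left (hUleN i)
    have h3 : Tendsto (fun k => (if k ∈ B then (1:ℝ) else 0)) (U i) (𝓝 (dirac i B)) := by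
      by_cases hfinAB : (A i \ B).Finite
      · have hd1 : dirac i B = 1 := by rw [hdiracdef]; simp [hfinAB]
        rw [hd1]
        refine Tendsto.congr' ?_ tendsto_const_nhds
        refine Filter.eventuallyEq_of_mem
          (Filter.inter_mem (hAiU i)
            (hUcof i (by rw [mem_cofinite, compl_compl]; exact hfinAB))
            : A i ∩ (A i \ B)ᶜ ∈ U i) ?_
        intro x hx
        have hxB : x ∈ B := by
          by_contra hxB
          exact hx.2 ⟨hx.1, hxB⟩
        simp [hxB]
      · have hd0 : dirac i B = 0 := by rw [hdiracdef]; simp [hfinAB]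
        rw [hd0]
        have hfinBA : (B ∩ A i).Finite := by
          rcases htrivA i B hB with h | h
          · exact h
          · exact absurd h hfinAB
        refine Tendsto.congr' ?_ tendsto_const_nhds
        refine Filter.eventuallyEq_of_mem
          (Filter.inter_mem (hAiU i)
            (hUcof i (by rw [mem_cofinite, compl_compl]; exact hfinBA))
            : A i ∩ (B ∩ A i)ᶜ ∈ U i) ?_
        intro x hx
        have hxB : x ∉ B := fun hxB => hx.2 ⟨hxB, hx.1⟩
        simp [hxB]
    have h4 : (fun k => l1Meas (μ k) B)
        = fun k => ρ k B + μ k k * (if k ∈ B then 1 else 0) := by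
      funext k
      simp only [hρdef]
      ring
    rw [h4]
    exact h1.add (h2.mul h3)
  have hlamval : ∀ (i : Fin 3) (B) (hB : B ∈ generateSetAlgebra (𝔅 ∪ Set.range A)),
      lam i B = Lf B hB + b * dirac i B :=
    fun i B hB => tendsto_nhds_unique (hlam i B) (hmain i B hB)
  have hbbig : c ≤ |b| := by
    by_contra hlt
    push_neg at hlt
    have hev : ∀ᶠ k in flt N, |μ k k - b| < c - |b| :=
      hbtenN.eventually (eventually_abs_sub_lt b (by linarith))
    have hfin2 : (N \ {k | |μ k k - b| < c - |b|}).Finite := mem_flt.1 hev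
    obtain ⟨x, hx⟩ := (hNinf.diff hfin2).nonempty
    have hxN : x ∈ N := hx.1
    have hxev : |μ x x - b| < c - |b| := by
      by_contra h
      exact hx.2 ⟨hxN, h⟩
    have hxc := hlarge x (hNS hxN)
    have htri : |μ x x| ≤ |μ x x - b| + |b| := by
      have := abs_add_le (μ x x - b) b
      simpa using this
    linarith
  set ν : Fin 3 → Set ℕ → ℝ := fun i B => lam i B - b * dirac i B with hνdef
  have hdiracne : ∀ i j, i ≠ j → dirac i ≠ dirac j := by
    intro i j hij h
    have h1 := congrFun h (A i)
    have h2 : dirac i (A i) = 1 := by rw [hdiracdef]; simp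
    have hAdiff : A j \ A i = A j := by
      ext x
      constructor
      · exact fun hx => hx.1
      · exact fun hx => ⟨hx, fun hxi => Set.disjoint_left.1 (hAdisj j i (Ne.symm hij)) hx hxi⟩
    have h3 : dirac j (A i) = 0 := by
      rw [hdiracdef]
      simp only [hAdiff]
      exact if_neg (hAinf j)
    rw [h2, h3] at h1
    norm_num at h1
  have hcluster : ∀ i, IsClusterPtOnIn μ N (generateSetAlgebra (𝔅 ∪ Set.range A))
      (fun B => b * dirac i B + ν i B) := by
    intro i ε₀ hε₀ F hF
    have hev1 : ∀ᶠ k in (U i : Filter ℕ), ∀ B ∈ F, |l1Meas (μ k) B - lam i B| < ε₀ :=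
      (Finset.eventually_all F).2
        (fun B _ => (hlam i B).eventually (eventually_abs_sub_lt (lam i B) hε₀))
    have hev2 : ∀ᶠ k in (U i : Filter ℕ), k ∈ N := hNU i
    have hev := hev1.and hev2
    refine ((hUinf i _ hev).mono ?_)
    rintro k ⟨hk1, hk2⟩
    refine ⟨hk2, fun B hBF => ?_⟩
    show |l1Meas (μ k) B - (b * dirac i B + ν i B)| < ε₀
    have hν2 : b * dirac i B + ν i B = lam i B := by
      simp only [hνdef]
      ring
    rw [hν2]
    exact hk1 B hBF
  have heps : ∀ i j, ∀ B ∈ generateSetAlgebra (𝔅 ∪ Set.range A),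
      |ν i B - ν j B| + |ν i Bᶜ - ν j Bᶜ| ≤ ε := by
    intro i j B hB
    have hBc : Bᶜ ∈ generateSetAlgebra (𝔅 ∪ Set.range A) :=
      MeasureTheory.isSetAlgebra_generateSetAlgebra.compl_mem hB
    have e1 : ν i B = Lf B hB := by
      simp only [hνdef]; rw [hlamval i B hB]; ring
    have e2 : ν j B = Lf B hB := by
      simp only [hνdef]; rw [hlamval j B hB]; ring
    have e3 : ν i Bᶜ = Lf Bᶜ hBc := by
      simp only [hνdef]; rw [hlamval i Bᶜ hBc]; ring
    have e4 : ν j Bᶜ = Lf Bᶜ hBc := by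
      simp only [hνdef]; rw [hlamval j Bᶜ hBc]; ring
    rw [e1, e2, e3, e4]
    simp only [sub_self, abs_zero, add_zero]
    linarith
  exact ⟨N, T, hNS, hTS, hNinf, hTinf, hNT, A, hAN, hAinf, hAdisj, condI,
    hdiracne, b, ν, hbbig, hcluster, heps⟩
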